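/- If a sequence of codes C_n ⊆ Σ_q^n over the channel introducing at most t bursts of length ≤ b has reconstruction degree N_t(C_n) = o(n^{s+1}), then for all sufficiently large n the code C_n is a (t−s−1,b)-burst-correcting code; equivalently, the difference set C_n^Δ = {x − y : x, y ∈ C_n, x ≠ y} is disjoint from B_{≤2(t−s−1),≤b}. -/

import Mathlib

open scoped BigOperators

/-- The cyclic interval of length `L` starting at position `i` in `ZMod n`. -/
def cycInt (n : ℕ) (i : ZMod n) (L : ℕ) : Set (ZMod n) :=
  {j | ∃ k : ℕ, k < L ∧ j = i + (k : ZMod n)}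

/-- `e` is a burst supported in the cyclic interval starting at `i` of length `L ≤ b`. -/
def BurstAt {G : Type*} [AddCommGroup G] {n : ℕ} (b : ℕ) (e : ZMod n → G)
    (i : ZMod n) (L : ℕ) : Prop :=
  L ≤ b ∧ ∀ j : ZMod n, e j ≠ 0 → j ∈ cycInt n i L

/-- `e` is a `b≤`-burst: its support lies in a cyclic interval of length at most `b`. -/
def IsBurst {G : Type*} [AddCommGroup G] {n : ℕ} (b : ℕ) (e : ZMod n → G) : Prop :=
  ∃ i L, BurstAt b e i L

/-- `w` is a sum of exactly `t` many `b≤`-bursts. -/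
def SumOfBursts {G : Type*} [AddCommGroup G] {n : ℕ} (b t : ℕ) (w : ZMod n → G) : Prop :=
  ∃ l : List (ZMod n → G), l.length = t ∧ (∀ e ∈ l, IsBurst b e) ∧ l.sum = w

/-- The cyclic burst distance: minimum number of `b≤`-bursts summing to `x - y`. -/
noncomputable def burstDist {G : Type*} [AddCommGroup G] {n : ℕ} (b : ℕ)
    (x y : ZMod n → G) : ℕ :=
  sInf {t | SumOfBursts b t (x - y)}

/-- `w` is a sum of exactly `t` pairwise disjoint `b≤`-bursts (disjoint covering intervals). -/
def SumOfDisjointBursts {G : Type*} [AddCommGroup G] {n : ℕ} (b t : ℕ)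
    (w : ZMod n → G) : Prop :=
  ∃ (es : Fin t → ZMod n → G) (ps : Fin t → ZMod n) (Ls : Fin t → ℕ),
    (∀ m, BurstAt b (es m) (ps m) (Ls m)) ∧
    (∀ m m' : Fin t, m ≠ m' → cycInt n (ps m) (Ls m) ∩ cycInt n (ps m') (Ls m') = ∅) ∧
    ∑ m, es m = w

/-- `B_{≤t,≤b}`: vectors expressible as a sum of at most `t` pairwise disjoint `b≤`-bursts. -/
def BSet (n b t : ℕ) (G : Type*) [AddCommGroup G] : Set (ZMod n → G) :=
  {w | ∃ i ≤ t, SumOfDisjointBursts b i w}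

/-- The radius-`t` burst ball around `x`. -/
def burstBall {G : Type*} [AddCommGroup G] {n : ℕ} (b t : ℕ) (x : ZMod n → G) :
    Set (ZMod n → G) :=
  {y | burstDist b x y ≤ t}

/-- A `(t,b)`-burst-correcting code: radius-`t` burst balls around distinct codewords
are disjoint. -/
def IsBurstCorrecting {G : Type*} [AddCommGroup G] {n : ℕ} (t b : ℕ)
    (C : Set (ZMod n → G)) : Prop :=
  ∀ u ∈ C, ∀ v ∈ C, u ≠ v → burstBall b t u ∩ burstBall b t v = ∅

section Helpers

variable {G : Type*} [AddCommGroup G] {n b : ℕ}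

lemma isBurst_single (hb : 1 ≤ b) (i : ZMod n) (g : G) :
    IsBurst b (fun j => if j = i then g else 0) := by
  refine ⟨i, 1, hb, fun j hj => ?_⟩
  refine ⟨0, Nat.zero_lt_one, ?_⟩
  by_cases h : j = i
  · simp [h]
  · simp [h] at hj

lemma sumOfBursts_neg {k : ℕ} {w : ZMod n → G} (h : SumOfBursts b k w) :
    SumOfBursts b k (-w) := by
  obtain ⟨l, hl, hbl, hsl⟩ := h
  refine ⟨l.map (fun e => -e), by simp [hl], ?_, ?_⟩
  · intro e he
    simp only [List.mem_map] at he
    obtain ⟨e', he', rfl⟩ := he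
    obtain ⟨i, L, hL, hsupp⟩ := hbl e' he'
    exact ⟨i, L, hL, fun j hj => hsupp j (by simpa using hj)⟩
  · rw [← hsl]
    have key : ∀ l' : List (ZMod n → G), (l'.map (fun e => -e)).sum = -l'.sum := by
      intro l'
      induction l' with
      | nil => simp
      | cons a l'' ih => simp only [List.map_cons, List.sum_cons, ih]; abel
    exact key l

lemma sumOfBursts_add {k k' : ℕ} {w w' : ZMod n → G}
    (h : SumOfBursts b k w) (h' : SumOfBursts b k' w') :
    SumOfBursts b (k + k') (w + w') := by
  obtain ⟨l, hl, hb1, hs1⟩ := h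
  obtain ⟨l', hl', hb2, hs2⟩ := h'
  exact ⟨l ++ l', by simp [hl, hl'], fun e he => (List.mem_append.1 he).elim (hb1 e) (hb2 e),
    by simp [List.sum_append, hs1, hs2]⟩

lemma sumOfBursts_indicator (hb : 1 ≤ b) (g : G) (S : Finset (ZMod n)) :
    SumOfBursts b S.card (fun j => if j ∈ S then g else 0) := by
  classical
  refine ⟨S.toList.map (fun i => fun j => if j = i then g else 0), by simp, ?_, ?_⟩
  · intro e he
    simp only [List.mem_map] at he
    obtain ⟨i, _, rfl⟩ := he
    exact isBurst_single hb i g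
  · rw [Finset.sum_map_toList]
    funext j
    rw [Finset.sum_apply]
    simp [Finset.sum_ite_eq]

lemma sumOfBursts_all [NeZero n] (hb : 1 ≤ b) (w : ZMod n → G) :
    SumOfBursts b n w := by
  classical
  refine ⟨(Finset.univ : Finset (ZMod n)).toList.map
      (fun i => fun j => if j = i then w i else 0), by simp [ZMod.card], ?_, ?_⟩
  · intro e he
    simp only [List.mem_map] at he
    obtain ⟨i, _, rfl⟩ := he
    exact isBurst_single hb i (w i)
  · rw [Finset.sum_map_toList]
    funext j
    rw [Finset.sum_apply]
    simp [Finset.sum_ite_eq]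

lemma burstDist_le_of_sum {x y : ZMod n → G} {k : ℕ} (h : SumOfBursts b k (x - y)) :
    burstDist b x y ≤ k :=
  Nat.sInf_le h

lemma exists_sum_of_burstDist_le [NeZero n] (hb : 1 ≤ b) {x y : ZMod n → G} {m : ℕ}
    (h : burstDist b x y ≤ m) : ∃ k ≤ m, SumOfBursts b k (x - y) := by
  have hne : (burstDist b x y) ∈ {t | SumOfBursts b t (x - y)} :=
    Nat.sInf_mem ⟨n, sumOfBursts_all hb (x - y)⟩
  exact ⟨burstDist b x y, h, hne⟩

/-- Core counting: a common point within distance `t-s-1` of `u` and `v` yields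
at least `n.choose (s+1)` common points of the radius-`t` balls. -/
lemma core_count [Fintype G] [NeZero n] (hb : 1 ≤ b) {t s : ℕ} (hs : s + 1 ≤ t)
    {g : G} (hg : g ≠ 0) (u v z : ZMod n → G) {ku kv : ℕ}
    (hku : ku ≤ t - s - 1) (hkv : kv ≤ t - s - 1)
    (hu : SumOfBursts b ku (u - z)) (hv : SumOfBursts b kv (v - z)) :
    (n.choose (s + 1)) ≤ (burstBall b t u ∩ burstBall b t v).ncard := by
  classical
  set f : Finset (ZMod n) → (ZMod n → G) :=
    fun S => z + fun j => if j ∈ S then g else 0 with hf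
  set T := Finset.powersetCard (s + 1) (Finset.univ : Finset (ZMod n)) with hT
  have hmem : ∀ S ∈ T, f S ∈ burstBall b t u ∩ burstBall b t v := by
    intro S hS
    have hcard : S.card = s + 1 := (Finset.mem_powersetCard.1 hS).2
    have key : ∀ (x : ZMod n → G) (k : ℕ), k ≤ t - s - 1 → SumOfBursts b k (x - z) →
        f S ∈ burstBall b t x := by
      intro x k hk hx
      have hneg : SumOfBursts b (s + 1) (-(fun j => if j ∈ S then g else 0)) := by
        have := sumOfBursts_neg (sumOfBursts_indicator hb g S)
        rwa [hcard] at this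
      have hsum : SumOfBursts b (k + (s + 1)) (x - f S) := by
        have := sumOfBursts_add hx hneg
        have heq : (x - z) + (-(fun j => if j ∈ S then g else 0)) = x - f S := by
          simp only [hf]; abel
        rwa [heq] at this
      have : burstDist b x (f S) ≤ k + (s + 1) := burstDist_le_of_sum hsum
      exact le_trans this (by omega)
    exact ⟨key u ku hku hu, key v kv hkv hv⟩
  have hinj : Set.InjOn f T := by
    intro S hS S' hS' hEq
    have hEq' : (fun j => if j ∈ S then g else 0) = (fun j => if j ∈ S' then g else 0) :=
      add_left_cancel hEq
    ext j
    have := congrFun hEq' j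
    by_cases h1 : j ∈ S <;> by_cases h2 : j ∈ S' <;> simp [h1, h2] at this ⊢
    · exact hg this
    · exact hg this.symm
  have hcardT : T.card = n.choose (s + 1) := by
    rw [hT, Finset.card_powersetCard, Finset.card_univ, ZMod.card]
  calc n.choose (s + 1) = (T.image f).card := by
        rw [Finset.card_image_of_injOn hinj, hcardT]
    _ = (↑(T.image f) : Set (ZMod n → G)).ncard := (Set.ncard_coe_finset _).symm
    _ ≤ (burstBall b t u ∩ burstBall b t v).ncard := by
        apply Set.ncard_le_ncard _ (Set.toFinite _)
        intro x hx
        simp only [Finset.coe_image, Set.mem_image, Finset.mem_coe] at hx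
        obtain ⟨S, hS, rfl⟩ := hx
        exact hmem S hS

end Helpers

/-- if a sequence of codes over the t-burst channel has reconstruction degree
N_t(C_n) = o(n^{s+1}), then for all sufficiently large n the code C_n is a
(t−s−1,b)-burst-correcting code; equivalently its difference set avoids
B_{≤2(t−s−1),≤b}. -/
theorem small_reconstruction_degree_implies_correcting {G : Type*} [AddCommGroup G]
    [Fintype G] (q t b s : ℕ) (hq : Fintype.card G = q) (hq2 : 2 ≤ q) (hb : 1 ≤ b)
    (hs : s + 1 ≤ t)
    (C : ∀ n : ℕ, Set (ZMod n → G))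
    (hN : ∀ ε : ℝ, 0 < ε → ∃ n₀ : ℕ, ∀ n ≥ n₀, ∀ u ∈ C n, ∀ v ∈ C n, u ≠ v →
      ((burstBall b t u ∩ burstBall b t v).ncard : ℝ) + 1 ≤ ε * (n : ℝ) ^ (s + 1)) :
    ∃ n₀ : ℕ, ∀ n ≥ n₀,
      IsBurstCorrecting (t - s - 1) b (C n) ∧
      ∀ x ∈ C n, ∀ y ∈ C n, x ≠ y → x - y ∉ BSet n b (2 * (t - s - 1)) G := by
  classical
  -- a nonzero element of G
  obtain ⟨g, hg⟩ : ∃ g : G, g ≠ 0 := by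
    by_contra h
    push_neg at h
    have : Fintype.card G ≤ 1 := by
      have : ∀ x : G, x ∈ ({0} : Finset G) := fun x => by simp [h x]
      calc Fintype.card G = Finset.univ.card := rfl
        _ ≤ ({0} : Finset G).card := Finset.card_le_card (fun x _ => this x)
        _ = 1 := Finset.card_singleton 0
    omega
  -- choose ε
  set ε : ℝ := 1 / (2 ^ (s + 1) * (Nat.factorial (s + 1) : ℝ)) with hε
  have hεpos : 0 < ε := by
    apply div_pos one_pos
    positivity
  obtain ⟨n₀, hn₀⟩ := hN ε hεpos
  refine ⟨max n₀ (2 * (s + 1)), fun n hn => ?_⟩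
  have hn1 : n₀ ≤ n := le_trans (le_max_left _ _) hn
  have hn2 : 2 * (s + 1) ≤ n := le_trans (le_max_right _ _) hn
  haveI : NeZero n := ⟨by omega⟩
  -- the binomial coefficient lower bound: ε * n^(s+1) ≤ choose n (s+1)
  have hchoose : ε * (n : ℝ) ^ (s + 1) ≤ (n.choose (s + 1) : ℝ) := by
    have h1 : ((n + 1 - (s + 1) : ℕ) ^ (s + 1) : ℝ) / (Nat.factorial (s + 1) : ℝ) ≤ n.choose (s + 1) :=
      Nat.pow_le_choose (s + 1) n
    have h2 : ((n + 1 - (s + 1) : ℕ) : ℝ) = (n : ℝ) - s := by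
      have : n + 1 - (s + 1) = n - s := by omega
      rw [this]
      push_cast [Nat.cast_sub (by omega : s ≤ n)]
      ring
    have h3 : (n : ℝ) / 2 ≤ (n : ℝ) - s := by
      have : (2 * (s + 1) : ℝ) ≤ n := by exact_mod_cast hn2
      linarith
    have h4 : ((n : ℝ) / 2) ^ (s + 1) ≤ ((n + 1 - (s + 1) : ℕ) : ℝ) ^ (s + 1) := by
      have h0 : (0:ℝ) ≤ (n : ℝ) / 2 := by positivity
      calc ((n : ℝ) / 2) ^ (s + 1) ≤ ((n : ℝ) - s) ^ (s + 1) := by gcongr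
        _ = ((n + 1 - (s + 1) : ℕ) : ℝ) ^ (s + 1) := by rw [h2]
    have h5 : ε * (n : ℝ) ^ (s + 1) = ((n : ℝ) / 2) ^ (s + 1) / (Nat.factorial (s + 1) : ℝ) := by
      rw [hε]
      field_simp
      rw [← mul_pow]; congr 1; ring
    rw [h5]
    exact le_trans (by gcongr) h1
  -- core contradiction
  have core : ∀ u ∈ C n, ∀ v ∈ C n, u ≠ v → ∀ z : ZMod n → G, ∀ ku kv : ℕ,
      ku ≤ t - s - 1 → kv ≤ t - s - 1 →
      SumOfBursts b ku (u - z) → SumOfBursts b kv (v - z) → False := by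
    intro u hu v hv huv z ku kv hku hkv h1 h2
    have hcount := core_count hb hs hg u v z hku hkv h1 h2
    have hN' := hn₀ n hn1 u hu v hv huv
    have : (n.choose (s + 1) : ℝ) ≤ ((burstBall b t u ∩ burstBall b t v).ncard : ℝ) := by
      exact_mod_cast hcount
    linarith
  constructor
  · -- burst correcting
    intro u hu v hv huv
    rw [Set.eq_empty_iff_forall_notMem]
    rintro z ⟨hzu, hzv⟩
    obtain ⟨ku, hku, h1⟩ := exists_sum_of_burstDist_le hb hzu
    obtain ⟨kv, hkv, h2⟩ := exists_sum_of_burstDist_le hb hzv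
    exact core u hu v hv huv z ku kv hku hkv h1 h2
  · -- difference set avoids BSet
    intro x hx y hy hxy hmem
    obtain ⟨i, hi, es, ps, Ls, hbursts, _, hsum⟩ := hmem
    set l : List (ZMod n → G) := List.ofFn es with hl
    have hlsum : l.sum = x - y := by
      rw [hl, List.sum_ofFn, hsum]
    have hlen : l.length = i := by simp [hl]
    have hlb : ∀ e ∈ l, IsBurst b e := by
      intro e he
      rw [hl, List.mem_ofFn] at he
      obtain ⟨m, rfl⟩ := he
      exact ⟨ps m, Ls m, hbursts m⟩
    set j : ℕ := min i (t - s - 1) with hj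
    set z : ZMod n → G := x - (l.take j).sum with hz
    have h1 : SumOfBursts b j (x - z) := by
      refine ⟨l.take j, ?_, fun e he => hlb e (List.mem_of_mem_take he), ?_⟩
      · rw [List.length_take, hlen]
        omega
      · rw [hz]; abel
    have h2 : SumOfBursts b (i - j) (y - z) := by
      have hdrop : (l.drop j).sum = z - y := by
        have happ := List.take_append_drop j l
        have hsplit : (l.take j).sum + (l.drop j).sum = x - y := by
          rw [← List.sum_append, happ, hlsum]
        rw [hz]
        have hd : (l.drop j).sum = (x - y) - (l.take j).sum := by
          rw [← hsplit]; abel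
        rw [hd]; abel
      have hzy : SumOfBursts b (i - j) (z - y) := by
        refine ⟨l.drop j, ?_, fun e he => hlb e (List.mem_of_mem_drop he), hdrop⟩
        rw [List.length_drop, hlen]
      have := sumOfBursts_neg hzy
      rwa [neg_sub] at this
    exact core x hx y hy hxy z j (i - j) (by omega) (by omega) h1 h2
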